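/- Let p be an odd prime, i > 0, and l an integer with 1 < l < p. Then C(l·p^i − 1, p^i + 1) ≡ 1 − l (mod p). -/

import Mathlib

open Nat

private lemma aux_div_mod (p l j : ℕ) (hp : 1 < p) (hl : 0 < l) :
    (l * p ^ (j + 1) - 1) % p = p - 1 ∧ (l * p ^ (j + 1) - 1) / p = l * p ^ j - 1 := by
  have hpos : 0 < l * p ^ j := Nat.mul_pos hl (Nat.pow_pos (by omega))
  have hm : p ≤ p * (l * p ^ j) := Nat.le_mul_of_pos_right p hpos
  have key : l * p ^ (j + 1) - 1 = p * (l * p ^ j - 1) + (p - 1) := by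
    have h1 : l * p ^ (j + 1) = p * (l * p ^ j) := by ring
    rw [h1, Nat.mul_sub]
    omega
  rw [key]
  constructor
  · rw [Nat.mul_add_mod]
    exact Nat.mod_eq_of_lt (by omega)
  · rw [Nat.mul_add_div (by omega), Nat.div_eq_of_lt (by omega)]
    omega

private lemma aux_choose (p l : ℕ) [Fact p.Prime] (hl : 0 < l) (hl' : l < p) :
    ∀ j, ((l * p ^ j - 1).choose (p ^ j) : ℤ) ≡ ((l : ℤ) - 1) [ZMOD (p : ℤ)] := by
  intro j
  induction j with
  | zero =>
    simp only [pow_zero, mul_one]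
    rw [Nat.choose_one_right]
    have h : ((l - 1 : ℕ) : ℤ) = (l : ℤ) - 1 := by omega
    rw [h]
  | succ j ih =>
    have hp : 1 < p := (Fact.out : p.Prime).one_lt
    obtain ⟨hmod, hdiv⟩ := aux_div_mod p l j hp hl
    refine (Choose.choose_modEq_choose_mod_mul_choose_div (p := p)).trans ?_
    have hd : p ^ (j + 1) / p = p ^ j := by
      rw [pow_succ, Nat.mul_div_cancel _ (by omega : 0 < p)]
    have hm0 : p ^ (j + 1) % p = 0 := by
      rw [pow_succ, Nat.mul_mod_left]
    rw [hmod, hdiv, hm0, hd, Nat.choose_zero_right]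
    simpa using ih

theorem stmt_7 (p i l : ℕ) (hp : p.Prime) (hodd : Odd p) (hi : 0 < i)
    (hl : 1 < l) (hl' : l < p) :
    (((l * p ^ i - 1).choose (p ^ i + 1) : ℤ)) ≡ 1 - (l : ℤ) [ZMOD (p : ℤ)] := by
  haveI : Fact p.Prime := ⟨hp⟩
  obtain ⟨j, rfl⟩ : ∃ j, i = j + 1 := ⟨i - 1, by omega⟩
  obtain ⟨hmod, hdiv⟩ := aux_div_mod p l j hp.one_lt (by omega)
  refine (Choose.choose_modEq_choose_mod_mul_choose_div (p := p)).trans ?_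
  have hk_mod : (p ^ (j + 1) + 1) % p = 1 := by
    rw [Nat.add_mod, pow_succ, Nat.mul_mod_left]
    simp [Nat.mod_eq_of_lt hp.one_lt]
  have hk_div : (p ^ (j + 1) + 1) / p = p ^ j := by
    rw [pow_succ, mul_comm, Nat.mul_add_div (by omega), Nat.div_eq_of_lt hp.one_lt]
    omega
  rw [hmod, hdiv, hk_mod, hk_div, Nat.choose_one_right]
  have h1 : ((l * p ^ j - 1).choose (p ^ j) : ℤ) ≡ ((l : ℤ) - 1) [ZMOD (p : ℤ)] :=
    aux_choose p l (by omega) hl' j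
  have hc : ((p - 1 : ℕ) : ℤ) = (p : ℤ) - 1 := by have := hp.one_lt; omega
  calc ((p - 1 : ℕ) * ((l * p ^ j - 1).choose (p ^ j)) : ℤ)
      ≡ ((p : ℤ) - 1) * ((l : ℤ) - 1) [ZMOD (p : ℤ)] := by
        push_cast [hc]
        exact Int.ModEq.mul_left _ h1
    _ ≡ 1 - (l : ℤ) [ZMOD (p : ℤ)] :=
        Int.modEq_iff_dvd.mpr ⟨1 - (l : ℤ), by ring⟩
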